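/- Let X ⊆ ℝ^d be a nonempty closed convex set with metric projection P_X, and let f_1, …, f_n : ℝ^d → ℝ be differentiable, μ-strongly convex and L-smooth with 0 < μ ≤ L; set f = (1/n)Σ_l f_l and let x* be the unique minimizer of f over X. Let φ, φ', π ∈ ℝⁿ be positive stochastic vectors, R a row-stochastic n×n matrix with φ'ᵀR = φᵀ, 0 < η < 1/(nL), λ ∈ (0, 1], and x_1, …, x_n, y_1, …, y_n ∈ ℝ^d with Σ_l y_l = Σ_l ∇f_l(x_l). Define z_i = (1 − λ)x_i + λ P_X(x_i − η y_i) and x⁺_i = Σ_j R_{ij} z_j. Assume the averaging contraction: with x̂ = Σ_j φ_j x_j, √(Σ_i φ'_i ‖Σ_j R_{ij} x_j − x̂‖²) ≤ σ·√(Σ_i φ_i ‖x_i − x̂‖²) for some σ ∈ (0, 1). Write φ̃ = √(1/min_i φ_i) and φ̃' = √(1/min_i φ'_i). Then √(Σ_i ‖x⁺_i − x_i‖²) ≤ λ·φ̃'·(1 + q_π(η, 1))·√(Σ_i φ_i ‖x_i − x*‖²) + [(1/√2)(φ̃ + σφ̃') + ηλL·φ̃φ̃'·√n]·D(x, φ)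 + ηλ·φ̃'·S(y, π), where q_π(η, λ) = max_i (1 − λ·η n π_i·μ). -/

import Mathlib

open Finset RealInnerProductSpace

set_option linter.unusedSectionVars false
set_option linter.unusedVariables false
set_option maxHeartbeats 1000000

section Aux

variable {E : Type*} [NormedAddCommGroup E] [InnerProductSpace ℝ E] [CompleteSpace E]

lemma aux_hasDerivAt_line (f : E → ℝ) (hf : Differentiable ℝ f) (u v : E) (t : ℝ) :
    HasDerivAt (fun s : ℝ => f (u + s • v)) ⟪gradient f (u + t • v), v⟫ t := by
  have hline : HasDerivAt (fun s : ℝ => u + s • v) v t := by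
    simpa using ((hasDerivAt_id t).smul_const v).const_add u
  have hgrad : HasFDerivAt f
      (InnerProductSpace.toDual ℝ E (gradient f (u + t • v))) (u + t • v) :=
    (hf _).hasGradientAt
  exact hgrad.comp_hasDerivAt t hline

lemma aux_upper_quad (f : E → ℝ) (hf : Differentiable ℝ f) {c : ℝ}
    (hmono : ∀ u v : E, ⟪gradient f u - gradient f v, u - v⟫ ≤ c * ‖u - v‖ ^ 2)
    (u v : E) : f v ≤ f u + ⟪gradient f u, v - u⟫ + c / 2 * ‖v - u‖ ^ 2 := by
  set δ := v - u with hδ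
  set φ : ℝ → ℝ := fun t => f (u + t • δ) - t * ⟪gradient f u, δ⟫ - c / 2 * t ^ 2 * ‖δ‖ ^ 2
    with hφ
  have hφ' : ∀ t : ℝ, HasDerivAt φ
      (⟪gradient f (u + t • δ), δ⟫ - ⟪gradient f u, δ⟫ - c * t * ‖δ‖ ^ 2) t := by
    intro t
    have h1 := aux_hasDerivAt_line f hf u δ t
    have h2 : HasDerivAt (fun t : ℝ => t * ⟪gradient f u, δ⟫) ⟪gradient f u, δ⟫ t := by
      simpa using (hasDerivAt_id t).mul_const ⟪gradient f u, δ⟫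
    have h3 : HasDerivAt (fun t : ℝ => c / 2 * t ^ 2 * ‖δ‖ ^ 2) (c * t * ‖δ‖ ^ 2) t := by
      have h4 := ((hasDerivAt_pow 2 t).const_mul (c / 2)).mul_const (‖δ‖ ^ 2)
      refine h4.congr_deriv ?_
      rw [show (2:ℕ) - 1 = 1 from rfl]
      push_cast
      ring
    exact (h1.sub h2).sub h3
  have hderiv : ∀ t ∈ Set.Ioo (0:ℝ) 1, deriv φ t ≤ 0 := by
    intro t ht
    rw [(hφ' t).deriv]
    have h5 := hmono (u + t • δ) u
    have h6 : (u + t • δ) - u = t • δ := by abel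
    rw [h6] at h5
    rw [real_inner_smul_right, norm_smul, Real.norm_eq_abs, abs_of_pos ht.1] at h5
    have h7 : ⟪gradient f (u + t • δ) - gradient f u, δ⟫ ≤ c * t * ‖δ‖ ^ 2 := by
      have ht0 : 0 < t := ht.1
      nlinarith [h5]
    rw [inner_sub_left] at h7
    linarith
  have hanti : AntitoneOn φ (Set.Icc (0:ℝ) 1) := by
    apply antitoneOn_of_deriv_nonpos (convex_Icc 0 1)
    · intro t _
      exact ((hφ' t).differentiableAt).continuousAt.continuousWithinAt
    · intro t ht
      exact ((hφ' t).differentiableAt).differentiableWithinAt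
    · intro t ht
      rw [interior_Icc] at ht
      exact hderiv t ht
  have h01 : φ 1 ≤ φ 0 := hanti ⟨le_refl 0, zero_le_one⟩ ⟨zero_le_one, le_refl 1⟩ zero_le_one
  simp only [hφ, one_smul, zero_smul, add_zero, one_pow, mul_one, mul_zero, zero_mul,
    sub_zero] at h01
  have huv : u + δ = v := by rw [hδ]; abel
  rw [huv] at h01
  linarith

lemma aux_lower_quad (f : E → ℝ) (hf : Differentiable ℝ f) {c : ℝ}
    (hmono : ∀ u v : E, c * ‖u - v‖ ^ 2 ≤ ⟪gradient f u - gradient f v, u - v⟫)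
    (u v : E) : f u + ⟪gradient f u, v - u⟫ + c / 2 * ‖v - u‖ ^ 2 ≤ f v := by
  set δ := v - u with hδ
  set φ : ℝ → ℝ := fun t => f (u + t • δ) - t * ⟪gradient f u, δ⟫ - c / 2 * t ^ 2 * ‖δ‖ ^ 2
    with hφ
  have hφ' : ∀ t : ℝ, HasDerivAt φ
      (⟪gradient f (u + t • δ), δ⟫ - ⟪gradient f u, δ⟫ - c * t * ‖δ‖ ^ 2) t := by
    intro t
    have h1 := aux_hasDerivAt_line f hf u δ t
    have h2 : HasDerivAt (fun t : ℝ => t * ⟪gradient f u, δ⟫) ⟪gradient f u, δ⟫ t := by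
      simpa using (hasDerivAt_id t).mul_const ⟪gradient f u, δ⟫
    have h3 : HasDerivAt (fun t : ℝ => c / 2 * t ^ 2 * ‖δ‖ ^ 2) (c * t * ‖δ‖ ^ 2) t := by
      have h4 := ((hasDerivAt_pow 2 t).const_mul (c / 2)).mul_const (‖δ‖ ^ 2)
      refine h4.congr_deriv ?_
      rw [show (2:ℕ) - 1 = 1 from rfl]
      push_cast
      ring
    exact (h1.sub h2).sub h3
  have hderiv : ∀ t ∈ Set.Ioo (0:ℝ) 1, 0 ≤ deriv φ t := by
    intro t ht
    rw [(hφ' t).deriv]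
    have h5 := hmono (u + t • δ) u
    have h6 : (u + t • δ) - u = t • δ := by abel
    rw [h6] at h5
    rw [real_inner_smul_right, norm_smul, Real.norm_eq_abs, abs_of_pos ht.1] at h5
    have h7 : c * t * ‖δ‖ ^ 2 ≤ ⟪gradient f (u + t • δ) - gradient f u, δ⟫ := by
      have ht0 : 0 < t := ht.1
      nlinarith [h5]
    rw [inner_sub_left] at h7
    linarith
  have hmon : MonotoneOn φ (Set.Icc (0:ℝ) 1) := by
    apply monotoneOn_of_deriv_nonneg (convex_Icc 0 1)
    · intro t _
      exact ((hφ' t).differentiableAt).continuousAt.continuousWithinAt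
    · intro t ht
      exact ((hφ' t).differentiableAt).differentiableWithinAt
    · intro t ht
      rw [interior_Icc] at ht
      exact hderiv t ht
  have h01 : φ 0 ≤ φ 1 := hmon ⟨le_refl 0, zero_le_one⟩ ⟨zero_le_one, le_refl 1⟩ zero_le_one
  simp only [hφ, one_smul, zero_smul, add_zero, one_pow, mul_one, mul_zero, zero_mul,
    sub_zero] at h01
  have huv : u + δ = v := by rw [hδ]; abel
  rw [huv] at h01
  linarith

lemma aux_coco (f : E → ℝ) (g : E → E) {K : ℝ} (hK : 0 < K)
    (h1 : ∀ u w : E, f u + ⟪g u, w - u⟫ ≤ f w)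
    (h2 : ∀ u w : E, f w ≤ f u + ⟪g u, w - u⟫ + K / 2 * ‖w - u‖ ^ 2) (u v : E) :
    ‖g u - g v‖ ^ 2 ≤ K * ⟪g u - g v, u - v⟫ := by
  have key : ∀ a b : E, f a + ⟪g a, b - a⟫ + 1 / (2 * K) * ‖g b - g a‖ ^ 2 ≤ f b := by
    intro a b
    set e := g b - g a with he
    have h1' := h1 a (b - (1 / K) • e)
    have h2' := h2 b (b - (1 / K) • e)
    have e1 : (b - (1 / K) • e) - a = (b - a) - (1 / K) • e := by abel
    have e2 : (b - (1 / K) • e) - b = -((1 / K) • e) := by abel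
    rw [e1, inner_sub_right, real_inner_smul_right] at h1'
    rw [e2, inner_neg_right, real_inner_smul_right, norm_neg, norm_smul, Real.norm_eq_abs,
      abs_of_pos (by positivity : (0:ℝ) < 1 / K)] at h2'
    have hgb : ⟪g b, e⟫ - ⟪g a, e⟫ = ‖e‖ ^ 2 := by
      rw [← inner_sub_left, ← he, real_inner_self_eq_norm_sq]
    have hKne : K ≠ 0 := ne_of_gt hK
    have expand : K / 2 * (1 / K * ‖e‖) ^ 2 = 1 / (2 * K) * ‖e‖ ^ 2 := by
      field_simp
    rw [expand] at h2'
    have hch := le_trans h1' h2'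
    have goal : f a + ⟪g a, b - a⟫ + 1 / (2 * K) * ‖e‖ ^ 2 ≤ f b := by
      have hrw : 1 / K * ⟪g b, e⟫ - 1 / K * ⟪g a, e⟫ = 1 / K * ‖e‖ ^ 2 := by
        rw [← mul_sub, hgb]
      have hhalf : 1 / K * ‖e‖ ^ 2 = 1 / (2 * K) * ‖e‖ ^ 2 + 1 / (2 * K) * ‖e‖ ^ 2 := by
        field_simp; ring
      linarith [hch, hrw, hhalf]
    exact goal
  have k1 := key u v
  have k2 := key v u
  have hsum : ⟪g u, v - u⟫ + ⟪g v, u - v⟫ + 1 / (2 * K) * ‖g v - g u‖ ^ 2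
      + 1 / (2 * K) * ‖g u - g v‖ ^ 2 ≤ 0 := by linarith
  have hrev : ‖g v - g u‖ = ‖g u - g v‖ := norm_sub_rev _ _
  rw [hrev] at hsum
  have hinner : ⟪g u, v - u⟫ + ⟪g v, u - v⟫ = -⟪g u - g v, u - v⟫ := by
    have huv : u - v = -(v - u) := by abel
    rw [huv, inner_neg_right, inner_neg_right, inner_sub_left]
    ring
  rw [hinner] at hsum
  have hhalf2 : 1 / K * ‖g u - g v‖ ^ 2
      = 1 / (2 * K) * ‖g u - g v‖ ^ 2 + 1 / (2 * K) * ‖g u - g v‖ ^ 2 := by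
    field_simp; ring
  have hfin : 1 / K * ‖g u - g v‖ ^ 2 ≤ ⟪g u - g v, u - v⟫ := by linarith
  calc ‖g u - g v‖ ^ 2 = K * (1 / K * ‖g u - g v‖ ^ 2) := by field_simp
    _ ≤ K * ⟪g u - g v, u - v⟫ := mul_le_mul_of_nonneg_left hfin (le_of_lt hK)

lemma aux_step_contract (f : E → ℝ) (hf : Differentiable ℝ f) {μ L α : ℝ}
    (hμ : 0 < μ) (hμL : μ ≤ L)
    (hs : ∀ u v : E, μ * ‖u - v‖ ^ 2 ≤ ⟪gradient f u - gradient f v, u - v⟫)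
    (hL : ∀ u v : E, ‖gradient f u - gradient f v‖ ≤ L * ‖u - v‖)
    (hα : 0 < α) (hαL : α * L < 1) (u v : E) :
    ‖(u - α • gradient f u) - (v - α • gradient f v)‖ ≤ (1 - α * μ) * ‖u - v‖ := by
  have hL0 : 0 < L := lt_of_lt_of_le hμ hμL
  have hαμ : α * μ < 1 := lt_of_le_of_lt (by nlinarith) hαL
  have hupper := aux_upper_quad f hf (c := L)
    (fun a b => le_trans (real_inner_le_norm _ _)
      (by nlinarith [hL a b, norm_nonneg (a - b), norm_nonneg (gradient f a - gradient f b)]))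
  have hlower := aux_lower_quad f hf (c := μ) hs
  set h : E → ℝ := fun w => f w - μ / 2 * ‖w‖ ^ 2 with hh
  set g : E → E := fun w => gradient f w - μ • w with hg
  set K : ℝ := 2 * (1 - α * μ) / α with hK
  have hKpos : 0 < K := by
    apply div_pos _ hα
    linarith
  have hquad : ∀ a b : E, μ / 2 * ‖b‖ ^ 2 - μ / 2 * ‖a‖ ^ 2 - μ * ⟪a, b - a⟫
      = μ / 2 * ‖b - a‖ ^ 2 := by
    intro a b
    have hns : ‖b - a‖ ^ 2 = ‖b‖ ^ 2 - 2 * ⟪b, a⟫ + ‖a‖ ^ 2 := norm_sub_sq_real b a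
    have hi : ⟪a, b - a⟫ = ⟪a, b⟫ - ‖a‖ ^ 2 := by
      rw [inner_sub_right, real_inner_self_eq_norm_sq]
    have hc : ⟪a, b⟫ = ⟪b, a⟫ := real_inner_comm b a
    rw [hns, hi, hc]; ring
  have h1 : ∀ a b : E, h a + ⟪g a, b - a⟫ ≤ h b := by
    intro a b
    have hlo := hlower a b
    simp only [hh, hg, inner_sub_left, real_inner_smul_left]
    have hq := hquad a b
    linarith
  have h2 : ∀ a b : E, h b ≤ h a + ⟪g a, b - a⟫ + K / 2 * ‖b - a‖ ^ 2 := by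
    intro a b
    have hup := hupper a b
    simp only [hh, hg, inner_sub_left, real_inner_smul_left]
    have hq := hquad a b
    have hKL : L - μ ≤ K := by
      rw [hK, le_div_iff₀ hα]
      nlinarith
    nlinarith [sq_nonneg ‖b - a‖]
  have hco := aux_coco h g hKpos h1 h2 u v
  set δ : E := u - v with hδ
  set e : E := g u - g v with he
  have hid : (u - α • gradient f u) - (v - α • gradient f v)
      = (1 - α * μ) • δ - α • e := by
    simp only [he, hg, hδ]
    module
  rw [hid]
  have hexp : ‖(1 - α * μ) • δ - α • e‖ ^ 2
      = (1 - α * μ) ^ 2 * ‖δ‖ ^ 2 - 2 * ((1 - α * μ) * α) * ⟪δ, e⟫ + α ^ 2 * ‖e‖ ^ 2 := by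
    rw [norm_sub_sq_real, real_inner_smul_left, real_inner_smul_right, norm_smul, norm_smul,
      Real.norm_eq_abs, Real.norm_eq_abs, mul_pow, mul_pow, sq_abs, sq_abs]
    ring
  have hEδ : ⟪e, δ⟫ = ⟪δ, e⟫ := real_inner_comm δ e
  have hcore : ‖(1 - α * μ) • δ - α • e‖ ^ 2 ≤ ((1 - α * μ) * ‖δ‖) ^ 2 := by
    rw [hexp]
    have hm : α ^ 2 * ‖e‖ ^ 2 ≤ α ^ 2 * (K * ⟪δ, e⟫) := by
      apply mul_le_mul_of_nonneg_left _ (sq_nonneg α)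
      rw [← hEδ]
      calc ‖e‖ ^ 2 = ‖g u - g v‖ ^ 2 := by rw [he]
        _ ≤ K * ⟪g u - g v, u - v⟫ := hco
        _ = K * ⟪e, δ⟫ := by rw [← he, ← hδ]
    have hKα : α ^ 2 * (K * ⟪δ, e⟫) = 2 * ((1 - α * μ) * α) * ⟪δ, e⟫ := by
      have hKα' : α ^ 2 * K = 2 * ((1 - α * μ) * α) := by
        rw [hK]; field_simp
      rw [← mul_assoc, hKα']
    have hmp : ((1 - α * μ) * ‖δ‖) ^ 2 = (1 - α * μ) ^ 2 * ‖δ‖ ^ 2 := by ring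
    linarith [hm, hKα.le, hKα.ge]
  have h1αμ : 0 ≤ (1 - α * μ) * ‖δ‖ := mul_nonneg (by linarith) (norm_nonneg δ)
  nlinarith [hcore, norm_nonneg ((1 - α * μ) • δ - α • e), h1αμ]

lemma aux_proj_vi {X : Set E} (hXconvex : Convex ℝ X) (P : E → E)
    (hPmem : ∀ v, P v ∈ X) (hPproj : ∀ v, ∀ u ∈ X, ‖v - P v‖ ≤ ‖v - u‖) (v : E) :
    ∀ w ∈ X, ⟪v - P v, w - P v⟫ ≤ 0 := by
  haveI : Nonempty X := ⟨⟨P v, hPmem v⟩⟩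
  have hinf : ‖v - P v‖ = ⨅ w : X, ‖v - w‖ := by
    apply le_antisymm
    · exact le_ciInf fun w => hPproj v w w.2
    · have hbdd : BddBelow (Set.range fun w : X => ‖v - (w : E)‖) := by
        refine ⟨0, ?_⟩
        rintro r ⟨w, rfl⟩
        exact norm_nonneg _
      exact ciInf_le hbdd ⟨P v, hPmem v⟩
  exact (norm_eq_iInf_iff_real_inner_le_zero hXconvex (hPmem v)).mp hinf

lemma aux_proj_nonexp {X : Set E} (hXconvex : Convex ℝ X) (P : E → E)
    (hPmem : ∀ v, P v ∈ X) (hPproj : ∀ v, ∀ u ∈ X, ‖v - P v‖ ≤ ‖v - u‖) (a b : E) :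
    ‖P a - P b‖ ≤ ‖a - b‖ := by
  have h1 := aux_proj_vi hXconvex P hPmem hPproj a (P b) (hPmem b)
  have h2 := aux_proj_vi hXconvex P hPmem hPproj b (P a) (hPmem a)
  have key : ‖P a - P b‖ ^ 2 ≤ ⟪a - b, P a - P b⟫ := by
    have e1 : ⟪a - P a, P b - P a⟫ = -⟪a - P a, P a - P b⟫ := by
      rw [show P b - P a = -(P a - P b) by abel, inner_neg_right]
    have e2 : ⟪b - P b, P a - P b⟫ ≤ 0 := h2
    rw [e1] at h1
    have h1' : 0 ≤ ⟪a - P a, P a - P b⟫ := by linarith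
    have expand : ⟪a - b, P a - P b⟫ - ⟪P a - P b, P a - P b⟫
        = ⟪a - P a, P a - P b⟫ - ⟪b - P b, P a - P b⟫ := by
      rw [← inner_sub_left, ← inner_sub_left]
      congr 1
      abel
    rw [real_inner_self_eq_norm_sq] at expand
    linarith
  rcases eq_or_lt_of_le (norm_nonneg (P a - P b)) with h | h
  · rw [← h]; exact norm_nonneg _
  · have hcs := le_trans key (real_inner_le_norm (a - b) (P a - P b))
    nlinarith [hcs, h, norm_nonneg (a - b)]

lemma aux_proj_fixed {X : Set E} (hXconvex : Convex ℝ X) (P : E → E)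
    (hPmem : ∀ v, P v ∈ X) (hPproj : ∀ v, ∀ u ∈ X, ‖v - P v‖ ≤ ‖v - u‖)
    {v p : E} (hp : p ∈ X) (hvi : ∀ w ∈ X, ⟪v - p, w - p⟫ ≤ 0) : P v = p := by
  have h1 := aux_proj_vi hXconvex P hPmem hPproj v p hp
  have h2 := hvi (P v) (hPmem v)
  have key : ‖p - P v‖ ^ 2 ≤ 0 := by
    have expand : ⟪p - P v, p - P v⟫ = ⟪v - P v, p - P v⟫ - ⟪v - p, p - P v⟫ := by
      rw [← inner_sub_left]
      congr 1
      abel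
    have e2 : ⟪v - p, p - P v⟫ = -⟪v - p, P v - p⟫ := by
      rw [show p - P v = -(P v - p) by abel, inner_neg_right]
    rw [← real_inner_self_eq_norm_sq, expand, e2]
    linarith
  have hz : ‖p - P v‖ = 0 := by nlinarith [norm_nonneg (p - P v)]
  exact (sub_eq_zero.mp (norm_eq_zero.mp hz)).symm

lemma aux_min_vi {X : Set E} (hXconvex : Convex ℝ X) (F : E → ℝ) {L : ℝ} (hL : 0 < L)
    (hupper : ∀ u v : E, F v ≤ F u + ⟪gradient F u, v - u⟫ + L / 2 * ‖v - u‖ ^ 2)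
    {xs : E} (hxs : xs ∈ X) (hmin : ∀ u ∈ X, F xs ≤ F u) :
    ∀ w ∈ X, 0 ≤ ⟪gradient F xs, w - xs⟫ := by
  intro w hw
  set G : ℝ := ⟪gradient F xs, w - xs⟫ with hG
  set C : ℝ := L / 2 * ‖w - xs‖ ^ 2 with hC
  have hC0 : 0 ≤ C := by positivity
  have key : ∀ t : ℝ, 0 < t → t ≤ 1 → 0 ≤ t * G + t ^ 2 * C := by
    intro t ht0 ht1
    have hmem : xs + t • (w - xs) ∈ X :=
      hXconvex.add_smul_sub_mem hxs hw ⟨le_of_lt ht0, ht1⟩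
    have h1 := hmin _ hmem
    have h2 := hupper xs (xs + t • (w - xs))
    have e1 : (xs + t • (w - xs)) - xs = t • (w - xs) := by abel
    rw [e1, real_inner_smul_right, norm_smul, Real.norm_eq_abs, abs_of_pos ht0] at h2
    have hle : F xs ≤ F xs + t * G + L / 2 * (t * ‖w - xs‖) ^ 2 := le_trans h1 h2
    rw [hC]
    nlinarith [hle]
  by_contra hneg
  push_neg at hneg
  set t : ℝ := min 1 (-G / (2 * (C + 1))) with ht
  have htpos : 0 < t := by
    apply lt_min one_pos
    apply div_pos (by linarith) (by linarith)
  have ht1 : t ≤ 1 := min_le_left _ _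
  have ht2 : t ≤ -G / (2 * (C + 1)) := min_le_right _ _
  have hk := key t htpos ht1
  have htC : t * C ≤ -G / 2 := by
    have h3 : t * C ≤ (-G / (2 * (C + 1))) * C :=
      mul_le_mul_of_nonneg_right ht2 hC0
    have h4 : (-G / (2 * (C + 1))) * C ≤ -G / 2 := by
      rw [div_mul_eq_mul_div, div_le_div_iff₀ (by linarith) (by norm_num)]
      nlinarith
    linarith
  have ht2' : t ^ 2 * C ≤ t * (-G / 2) := by
    have hr : t ^ 2 * C = t * (t * C) := by ring
    rw [hr]
    exact mul_le_mul_of_nonneg_left htC (le_of_lt htpos)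
  nlinarith [hk, ht2', htpos]

lemma aux_gradF {n : ℕ} (f : Fin n → E → ℝ) (hfdiff : ∀ i, Differentiable ℝ (f i))
    (F : E → ℝ) (hF : F = fun v => (1 / (n : ℝ)) * ∑ l, f l v) (v : E) :
    gradient F v = (n : ℝ)⁻¹ • ∑ l, gradient (f l) v := by
  have h1 : HasFDerivAt (fun w => ∑ l, f l w)
      (∑ l, InnerProductSpace.toDual ℝ E (gradient (f l) v)) v := by
    apply HasFDerivAt.fun_sum
    intro l _
    exact (hfdiff l v).hasGradientAt
  have h2 := h1.const_mul ((n : ℝ)⁻¹)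
  have h3 : HasGradientAt F ((n : ℝ)⁻¹ • ∑ l, gradient (f l) v) v := by
    rw [hasGradientAt_iff_hasFDerivAt]
    have hdual : InnerProductSpace.toDual ℝ E ((n : ℝ)⁻¹ • ∑ l, gradient (f l) v)
        = (n : ℝ)⁻¹ • ∑ l, InnerProductSpace.toDual ℝ E (gradient (f l) v) := by
      rw [map_smul, map_sum]
    rw [hdual, hF]
    simpa [one_div, smul_eq_mul] using h2
  exact h3.gradient

end Aux

lemma aux_sqrt_mono {m : ℕ} {u v : Fin m → ℝ} (hu : ∀ i, 0 ≤ u i) (h : ∀ i, u i ≤ v i) :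
    Real.sqrt (∑ i, u i ^ 2) ≤ Real.sqrt (∑ i, v i ^ 2) :=
  Real.sqrt_le_sqrt (Finset.sum_le_sum fun i _ => pow_le_pow_left₀ (hu i) (h i) 2)

lemma aux_mink {m : ℕ} (u v : Fin m → ℝ) :
    Real.sqrt (∑ i, (u i + v i) ^ 2)
      ≤ Real.sqrt (∑ i, u i ^ 2) + Real.sqrt (∑ i, v i ^ 2) := by
  have h := norm_add_le ((WithLp.equiv 2 (Fin m → ℝ)).symm u) ((WithLp.equiv 2 (Fin m → ℝ)).symm v)
  have hn : ∀ w : Fin m → ℝ,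
      ‖(WithLp.equiv 2 (Fin m → ℝ)).symm w‖ = Real.sqrt (∑ i, w i ^ 2) := by
    intro w
    rw [EuclideanSpace.norm_eq]
    congr 1
    refine Finset.sum_congr rfl fun i _ => ?_
    rw [WithLp.equiv_symm_apply, PiLp.toLp_apply, Real.norm_eq_abs, sq_abs]
  have hadd : (WithLp.equiv 2 (Fin m → ℝ)).symm u + (WithLp.equiv 2 (Fin m → ℝ)).symm v
      = (WithLp.equiv 2 (Fin m → ℝ)).symm (u + v) := by
    rw [WithLp.equiv_symm_apply, WithLp.toLp_add]
  rw [hadd, hn, hn, hn] at h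
  exact h

lemma aux_sqrt_wsum (m : ℕ) (a w u v t : Fin m → ℝ) (ha : ∀ i, 0 ≤ a i)
    (hw0 : ∀ i, 0 ≤ w i) (hw : ∀ i, w i ≤ u i + v i + t i) :
    Real.sqrt (∑ i, a i * w i ^ 2)
      ≤ Real.sqrt (∑ i, a i * u i ^ 2) + Real.sqrt (∑ i, a i * v i ^ 2)
        + Real.sqrt (∑ i, a i * t i ^ 2) := by
  have hrw : ∀ r : Fin m → ℝ, (∑ i, a i * r i ^ 2) = ∑ i, (Real.sqrt (a i) * r i) ^ 2 := by
    intro r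
    refine Finset.sum_congr rfl fun i _ => ?_
    rw [mul_pow, Real.sq_sqrt (ha i)]
  rw [hrw w, hrw u, hrw v, hrw t]
  calc Real.sqrt (∑ i, (Real.sqrt (a i) * w i) ^ 2)
      ≤ Real.sqrt (∑ i, ((Real.sqrt (a i) * u i + Real.sqrt (a i) * v i)
          + Real.sqrt (a i) * t i) ^ 2) := by
        apply aux_sqrt_mono (fun i => mul_nonneg (Real.sqrt_nonneg _) (hw0 i))
        intro i
        have hmm := mul_le_mul_of_nonneg_left (hw i) (Real.sqrt_nonneg (a i))
        nlinarith [hmm]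
    _ ≤ Real.sqrt (∑ i, (Real.sqrt (a i) * u i + Real.sqrt (a i) * v i) ^ 2)
          + Real.sqrt (∑ i, (Real.sqrt (a i) * t i) ^ 2) := aux_mink _ _
    _ ≤ Real.sqrt (∑ i, (Real.sqrt (a i) * u i) ^ 2)
          + Real.sqrt (∑ i, (Real.sqrt (a i) * v i) ^ 2)
          + Real.sqrt (∑ i, (Real.sqrt (a i) * t i) ^ 2) := by
        have hmk := aux_mink (fun i => Real.sqrt (a i) * u i) (fun i => Real.sqrt (a i) * v i)
        linarith

lemma aux_unweight {m : ℕ} [NeZero m] (a : Fin m → ℝ) (ha : ∀ i, 0 < a i)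
    (r : Fin m → ℝ) (hr : ∀ i, 0 ≤ r i) :
    Real.sqrt (∑ i, r i)
      ≤ Real.sqrt (1 / (Finset.univ.inf' Finset.univ_nonempty a))
        * Real.sqrt (∑ i, a i * r i) := by
  set c : ℝ := Finset.univ.inf' Finset.univ_nonempty a with hc
  have hc0 : 0 < c := by
    rw [hc, Finset.lt_inf'_iff]
    exact fun i _ => ha i
  rw [← Real.sqrt_mul (by positivity) _]
  apply Real.sqrt_le_sqrt
  rw [Finset.mul_sum]
  apply Finset.sum_le_sum
  intro i _
  have hca : c ≤ a i := Finset.inf'_le _ (Finset.mem_univ i)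
  rw [div_mul_eq_mul_div, one_mul, le_div_iff₀ hc0]
  nlinarith [hr i, hca, hc0]

lemma aux_pull {m : ℕ} (c : ℝ) (hc : 0 ≤ c) (r : Fin m → ℝ) :
    Real.sqrt (∑ i, (c * r i) ^ 2) = c * Real.sqrt (∑ i, r i ^ 2) := by
  have hrw : (∑ i, (c * r i) ^ 2) = c ^ 2 * ∑ i, r i ^ 2 := by
    rw [Finset.mul_sum]
    exact Finset.sum_congr rfl fun i _ => by ring
  rw [hrw, Real.sqrt_mul (sq_nonneg c), Real.sqrt_sq hc]



/-- Consensus error `D(u, a) = √(Σ_i Σ_j a_i a_j ‖u_i − u_j‖²)`. -/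
noncomputable def Derr {n d : ℕ} (a : Fin n → ℝ) (u : Fin n → EuclideanSpace ℝ (Fin d)) : ℝ :=
  Real.sqrt (∑ i, ∑ j, a i * a j * ‖u i - u j‖ ^ 2)

/-- Gradient-tracking error `S(y, a) = √(Σ_i a_i ‖y_i/a_i − Σ_l y_l‖²)`. -/
noncomputable def Serr {n d : ℕ} (a : Fin n → ℝ) (y : Fin n → EuclideanSpace ℝ (Fin d)) : ℝ :=
  Real.sqrt (∑ i, a i * ‖(a i)⁻¹ • y i - (∑ l, y l)‖ ^ 2)

/-- Minimum entry of a vector over `Fin n`, `n ≠ 0`. -/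
noncomputable def fmin {n : ℕ} [NeZero n] (a : Fin n → ℝ) : ℝ :=
  Finset.univ.inf' Finset.univ_nonempty a

/-- `q_π(η, λ) = max_i (1 − λ·ηnπ_i·μ)`. -/
noncomputable def qmax {n : ℕ} [NeZero n] (π : Fin n → ℝ) (μ η lam : ℝ) : ℝ :=
  Finset.univ.sup' Finset.univ_nonempty (fun i => 1 - lam * (η * n * π i) * μ)

/-- Bounding the distance between consecutive iterates,
Proposition `consecutive-terms-bound`. With `φ̃ = √(1/min φ)`, `φ̃' = √(1/min φ')`,
`√(Σ_i ‖x⁺_i − x_i‖²) ≤ λφ̃'(1 + q_π(η,1))·‖x − x*‖_φ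
+ [(1/√2)(φ̃ + σφ̃') + ηλLφ̃φ̃'√n]·D(x, φ) + ηλφ̃'·S(y, π)`. -/
theorem consecutive_iterates_bound {n d : ℕ} [NeZero n]
    (X : Set (EuclideanSpace ℝ (Fin d))) (hXne : X.Nonempty)
    (hXclosed : IsClosed X) (hXconvex : Convex ℝ X)
    (P : EuclideanSpace ℝ (Fin d) → EuclideanSpace ℝ (Fin d))
    (hPmem : ∀ v, P v ∈ X)
    (hPproj : ∀ v, ∀ u ∈ X, ‖v - P v‖ ≤ ‖v - u‖)
    (f : Fin n → EuclideanSpace ℝ (Fin d) → ℝ)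
    (hfdiff : ∀ i, Differentiable ℝ (f i))
    (μ L : ℝ) (hμ : 0 < μ) (hμL : μ ≤ L)
    (hstrong : ∀ i u v, μ * ‖u - v‖ ^ 2 ≤ ⟪gradient (f i) u - gradient (f i) v, u - v⟫)
    (hsmooth : ∀ i u v, ‖gradient (f i) u - gradient (f i) v‖ ≤ L * ‖u - v‖)
    (F : EuclideanSpace ℝ (Fin d) → ℝ)
    (hF : F = fun v => (1 / (n : ℝ)) * ∑ l, f l v)
    (xs : EuclideanSpace ℝ (Fin d)) (hxsmem : xs ∈ X)
    (hxsmin : ∀ u ∈ X, F xs ≤ F u)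
    (hxsuniq : ∀ u ∈ X, (∀ v ∈ X, F u ≤ F v) → u = xs)
    (φ φ' π : Fin n → ℝ)
    (hφpos : ∀ i, 0 < φ i) (hφsum : ∑ i, φ i = 1)
    (hφ'pos : ∀ i, 0 < φ' i) (hφ'sum : ∑ i, φ' i = 1)
    (hπpos : ∀ i, 0 < π i) (hπsum : ∑ i, π i = 1)
    (R : Fin n → Fin n → ℝ)
    (hRnonneg : ∀ i j, 0 ≤ R i j) (hRrow : ∀ i, ∑ j, R i j = 1)
    (hφR : ∀ j, ∑ i, φ' i * R i j = φ j)
    (η lam : ℝ) (hη0 : 0 < η) (hη : η < 1 / (n * L)) (hlam0 : 0 < lam) (hlam1 : lam ≤ 1)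
    (x y : Fin n → EuclideanSpace ℝ (Fin d))
    (htrack : ∑ l, y l = ∑ l, gradient (f l) (x l))
    (z xplus : Fin n → EuclideanSpace ℝ (Fin d))
    (hz : ∀ i, z i = (1 - lam) • x i + lam • P (x i - η • y i))
    (hxplus : ∀ i, xplus i = ∑ j, R i j • z j)
    (σ : ℝ) (hσ0 : 0 < σ) (hσ1 : σ < 1)
    (hRcontr : Real.sqrt (∑ i, φ' i * ‖(∑ j, R i j • x j) - (∑ j, φ j • x j)‖ ^ 2)
      ≤ σ * Real.sqrt (∑ i, φ i * ‖x i - (∑ j, φ j • x j)‖ ^ 2)) :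
    Real.sqrt (∑ i, ‖xplus i - x i‖ ^ 2)
      ≤ lam * Real.sqrt (1 / fmin φ') * (1 + qmax π μ η 1)
          * Real.sqrt (∑ i, φ i * ‖x i - xs‖ ^ 2)
        + ((1 / Real.sqrt 2) * (Real.sqrt (1 / fmin φ) + σ * Real.sqrt (1 / fmin φ'))
            + η * lam * L * Real.sqrt (1 / fmin φ) * Real.sqrt (1 / fmin φ')
              * Real.sqrt (n : ℝ)) * Derr φ x
        + η * lam * Real.sqrt (1 / fmin φ') * Serr π y := by
  classical
  have hn0 : (0:ℝ) < (n : ℝ) := by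
    exact_mod_cast Nat.pos_of_ne_zero (NeZero.ne n)
  have hL0 : 0 < L := lt_of_lt_of_le hμ hμL
  have hnL : 0 < (n : ℝ) * L := mul_pos hn0 hL0
  have hηnL : η * ((n : ℝ) * L) < 1 := by
    have h := (lt_div_iff₀ hnL).mp hη
    linarith
  have hgradF : ∀ v, gradient F v = (n : ℝ)⁻¹ • ∑ l, gradient (f l) v :=
    aux_gradF f hfdiff F hF
  have hFdiff : Differentiable ℝ F := by
    rw [hF]
    exact Differentiable.const_mul (Differentiable.fun_sum fun l _ => hfdiff l) _
  have hFs : ∀ u v, μ * ‖u - v‖ ^ 2 ≤ ⟪gradient F u - gradient F v, u - v⟫ := by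
    intro u v
    rw [hgradF u, hgradF v, ← smul_sub, ← Finset.sum_sub_distrib, real_inner_smul_left,
      sum_inner]
    have hsum : (n:ℝ) * (μ * ‖u - v‖ ^ 2)
        ≤ ∑ l, ⟪gradient (f l) u - gradient (f l) v, u - v⟫ := by
      calc (n:ℝ) * (μ * ‖u - v‖ ^ 2) = ∑ _l : Fin n, μ * ‖u - v‖ ^ 2 := by
            rw [Finset.sum_const, card_univ, Fintype.card_fin, nsmul_eq_mul]
        _ ≤ _ := Finset.sum_le_sum fun l _ => hstrong l u v
    calc μ * ‖u - v‖ ^ 2 = (n:ℝ)⁻¹ * ((n:ℝ) * (μ * ‖u - v‖ ^ 2)) := by field_simp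
      _ ≤ _ := mul_le_mul_of_nonneg_left hsum (by positivity)
  have hFL : ∀ u v, ‖gradient F u - gradient F v‖ ≤ L * ‖u - v‖ := by
    intro u v
    rw [hgradF u, hgradF v, ← smul_sub, ← Finset.sum_sub_distrib, norm_smul,
      Real.norm_eq_abs, abs_of_pos (by positivity : (0:ℝ) < (n:ℝ)⁻¹)]
    have hsum : ‖∑ l, (gradient (f l) u - gradient (f l) v)‖ ≤ (n:ℝ) * (L * ‖u - v‖) := by
      calc ‖∑ l, (gradient (f l) u - gradient (f l) v)‖
          ≤ ∑ l, ‖gradient (f l) u - gradient (f l) v‖ := norm_sum_le _ _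
        _ ≤ ∑ _l : Fin n, L * ‖u - v‖ := Finset.sum_le_sum fun l _ => hsmooth l u v
        _ = (n:ℝ) * (L * ‖u - v‖) := by
            rw [Finset.sum_const, card_univ, Fintype.card_fin, nsmul_eq_mul]
    calc (n:ℝ)⁻¹ * ‖∑ l, (gradient (f l) u - gradient (f l) v)‖
        ≤ (n:ℝ)⁻¹ * ((n:ℝ) * (L * ‖u - v‖)) := mul_le_mul_of_nonneg_left hsum (by positivity)
      _ = L * ‖u - v‖ := by field_simp
  have hupperF : ∀ u v, F v ≤ F u + ⟪gradient F u, v - u⟫ + L / 2 * ‖v - u‖ ^ 2 :=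
    aux_upper_quad F hFdiff (fun a b => le_trans (real_inner_le_norm _ _)
      (by nlinarith [hFL a b, norm_nonneg (a - b),
        norm_nonneg (gradient F a - gradient F b)]))
  have hvi := aux_min_vi hXconvex F hL0 hupperF hxsmem hxsmin
  have hfix : ∀ α : ℝ, 0 < α → P (xs - α • gradient F xs) = xs := by
    intro α hα
    apply aux_proj_fixed hXconvex P hPmem hPproj hxsmem
    intro w hw
    have he : (xs - α • gradient F xs) - xs = -(α • gradient F xs) := by abel
    rw [he, inner_neg_left, real_inner_smul_left]
    have hgw := hvi w hw
    nlinarith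
  have hcontr : ∀ (α : ℝ), 0 < α → α * L < 1 → ∀ u,
      ‖P (u - α • gradient F u) - xs‖ ≤ (1 - α * μ) * ‖u - xs‖ := by
    intro α hα hαL1 u
    have h1 : ‖P (u - α • gradient F u) - P (xs - α • gradient F xs)‖
        ≤ ‖(u - α • gradient F u) - (xs - α • gradient F xs)‖ :=
      aux_proj_nonexp hXconvex P hPmem hPproj _ _
    rw [hfix α hα] at h1
    exact h1.trans (aux_step_contract F hFdiff hμ hμL hFs hFL hα hαL1 u xs)
  have hπ1 : ∀ j, π j ≤ 1 := by
    intro j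
    have h := Finset.single_le_sum (f := π) (fun i _ => (hπpos i).le) (Finset.mem_univ j)
    rw [hπsum] at h; exact h
  have hφ1 : ∀ j, φ j ≤ 1 := by
    intro j
    have h := Finset.single_le_sum (f := φ) (fun i _ => (hφpos i).le) (Finset.mem_univ j)
    rw [hφsum] at h; exact h
  have hqge : ∀ j, 1 - η * ((n:ℝ) * π j) * μ ≤ qmax π μ η 1 := by
    intro j
    have h := Finset.le_sup' (fun i => 1 - 1 * (η * (n:ℝ) * π i) * μ) (Finset.mem_univ j)
    calc 1 - η * ((n:ℝ) * π j) * μ = 1 - 1 * (η * (n:ℝ) * π j) * μ := by ring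
      _ ≤ _ := h
  have hαpos : ∀ j, 0 < η * ((n:ℝ) * π j) := fun j => mul_pos hη0 (mul_pos hn0 (hπpos j))
  have hαL : ∀ j, (η * ((n:ℝ) * π j)) * L < 1 := by
    intro j
    have he : η * ((n:ℝ) * π j) * L = (η * ((n:ℝ) * L)) * π j := by ring
    rw [he]
    calc (η * ((n:ℝ) * L)) * π j < 1 * π j := mul_lt_mul_of_pos_right hηnL (hπpos j)
      _ ≤ 1 := by rw [one_mul]; exact hπ1 j
  have hq0 : 0 < qmax π μ η 1 := by
    have j0 : Fin n := ⟨0, Nat.pos_of_ne_zero (NeZero.ne n)⟩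
    have h1 := hqge j0
    have h2 : η * ((n:ℝ) * π j0) * μ < 1 :=
      lt_of_le_of_lt (by nlinarith [(hαpos j0).le]) (hαL j0)
    linarith
  -- pointwise bound on the projection displacement
  have hwb : ∀ j, ‖P (x j - η • y j) - x j‖
      ≤ (1 + qmax π μ η 1) * ‖x j - xs‖
        + η * π j * ‖(π j)⁻¹ • y j - ∑ l, y l‖
        + η * (π j * (L * ∑ l, ‖x l - x j‖)) := by
    intro j
    set α : ℝ := η * ((n:ℝ) * π j) with hα
    have hgd : ‖P (x j - α • gradient F (x j)) - xs‖ ≤ (1 - α * μ) * ‖x j - xs‖ :=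
      hcontr α (hαpos j) (hαL j) (x j)
    have hne : ‖P (x j - η • y j) - P (x j - α • gradient F (x j))‖
        ≤ ‖(x j - η • y j) - (x j - α • gradient F (x j))‖ :=
      aux_proj_nonexp hXconvex P hPmem hPproj _ _
    have hyy : π j • ((π j)⁻¹ • y j) = y j := smul_inv_smul₀ (ne_of_gt (hπpos j)) (y j)
    have hdiff : (x j - η • y j) - (x j - α • gradient F (x j))
        = η • (π j • ((∑ l, gradient (f l) (x j)) - (∑ l, gradient (f l) (x l)))
            + π j • ((∑ l, y l) - (π j)⁻¹ • y j)) := by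
      have e2 : α • gradient F (x j) = (η * π j) • (∑ l, gradient (f l) (x j)) := by
        rw [hgradF (x j), smul_smul]
        congr 1
        rw [hα]
        field_simp
      have e3 : π j • ((∑ l, gradient (f l) (x j)) - (∑ l, gradient (f l) (x l)))
          + π j • ((∑ l, y l) - (π j)⁻¹ • y j)
          = π j • (∑ l, gradient (f l) (x j)) - y j := by
        rw [← htrack, smul_sub, smul_sub, hyy]
        abel
      calc (x j - η • y j) - (x j - α • gradient F (x j))
          = α • gradient F (x j) - η • y j := by abel
        _ = (η * π j) • (∑ l, gradient (f l) (x j)) - η • y j := by rw [e2]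
        _ = η • (π j • (∑ l, gradient (f l) (x j)) - y j) := by
            rw [smul_sub, smul_smul]
        _ = _ := by rw [e3]
    have hnd : ‖(x j - η • y j) - (x j - α • gradient F (x j))‖
        ≤ η * π j * ‖(π j)⁻¹ • y j - ∑ l, y l‖ + η * (π j * (L * ∑ l, ‖x l - x j‖)) := by
      rw [hdiff, norm_smul, Real.norm_eq_abs, abs_of_pos hη0]
      have hA : ‖(∑ l, gradient (f l) (x j)) - (∑ l, gradient (f l) (x l))‖
          ≤ L * ∑ l, ‖x l - x j‖ := by
        rw [← Finset.sum_sub_distrib]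
        calc ‖∑ l, (gradient (f l) (x j) - gradient (f l) (x l))‖
            ≤ ∑ l, ‖gradient (f l) (x j) - gradient (f l) (x l)‖ := norm_sum_le _ _
          _ ≤ ∑ l, L * ‖x l - x j‖ := by
              apply Finset.sum_le_sum
              intro l _
              have h := hsmooth l (x j) (x l)
              rw [norm_sub_rev (x j) (x l)] at h
              exact h
          _ = L * ∑ l, ‖x l - x j‖ := by rw [Finset.mul_sum]
      have hB : ‖(∑ l, y l) - (π j)⁻¹ • y j‖ = ‖(π j)⁻¹ • y j - ∑ l, y l‖ :=
        norm_sub_rev _ _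
      have htr : ‖π j • ((∑ l, gradient (f l) (x j)) - (∑ l, gradient (f l) (x l)))
          + π j • ((∑ l, y l) - (π j)⁻¹ • y j)‖
          ≤ π j * (L * ∑ l, ‖x l - x j‖) + π j * ‖(π j)⁻¹ • y j - ∑ l, y l‖ := by
        calc _ ≤ ‖π j • ((∑ l, gradient (f l) (x j)) - (∑ l, gradient (f l) (x l)))‖
              + ‖π j • ((∑ l, y l) - (π j)⁻¹ • y j)‖ := norm_add_le _ _
          _ ≤ π j * (L * ∑ l, ‖x l - x j‖) + π j * ‖(π j)⁻¹ • y j - ∑ l, y l‖ := by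
              rw [norm_smul, norm_smul, Real.norm_eq_abs, abs_of_pos (hπpos j), hB]
              have := mul_le_mul_of_nonneg_left hA (hπpos j).le
              linarith
      have := mul_le_mul_of_nonneg_left htr hη0.le
      nlinarith [this]
    have htri : ‖P (x j - η • y j) - x j‖
        ≤ ‖P (x j - η • y j) - P (x j - α • gradient F (x j))‖
          + ‖P (x j - α • gradient F (x j)) - xs‖ + ‖xs - x j‖ := by
      have h1 := norm_sub_le_norm_sub_add_norm_sub (P (x j - η • y j))
        (P (x j - α • gradient F (x j))) (x j)
      have h2 := norm_sub_le_norm_sub_add_norm_sub (P (x j - α • gradient F (x j))) xs (x j)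
      linarith
    have hqq : (1 - α * μ) * ‖x j - xs‖ ≤ qmax π μ η 1 * ‖x j - xs‖ :=
      mul_le_mul_of_nonneg_right (by rw [hα]; exact hqge j) (norm_nonneg _)
    have hrev : ‖xs - x j‖ = ‖x j - xs‖ := norm_sub_rev _ _
    rw [hrev] at htri
    calc ‖P (x j - η • y j) - x j‖
        ≤ ‖(x j - η • y j) - (x j - α • gradient F (x j))‖
          + (1 - α * μ) * ‖x j - xs‖ + ‖x j - xs‖ := by linarith [htri, hne, hgd]
      _ ≤ (η * π j * ‖(π j)⁻¹ • y j - ∑ l, y l‖ + η * (π j * (L * ∑ l, ‖x l - x j‖)))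
          + qmax π μ η 1 * ‖x j - xs‖ + ‖x j - xs‖ := by linarith [hnd, hqq]
      _ = (1 + qmax π μ η 1) * ‖x j - xs‖
          + η * π j * ‖(π j)⁻¹ • y j - ∑ l, y l‖
          + η * (π j * (L * ∑ l, ‖x l - x j‖)) := by ring
  -- global notation
  set xh : EuclideanSpace ℝ (Fin d) := ∑ j, φ j • x j with hxh
  set wv : Fin n → EuclideanSpace ℝ (Fin d) := fun j => P (x j - η • y j) - x j with hwv
  have hzj : ∀ j, z j = x j + lam • wv j := by
    intro j
    rw [hz j]
    simp only [hwv]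
    module
  have hxplus' : ∀ i, xplus i - x i
      = ((∑ j, R i j • x j) - xh) + ((xh - x i) + lam • (∑ j, R i j • wv j)) := by
    intro i
    rw [hxplus i]
    have hsz : ∑ j, R i j • z j = (∑ j, R i j • x j) + lam • ∑ j, R i j • wv j := by
      calc ∑ j, R i j • z j = ∑ j, (R i j • x j + lam • (R i j • wv j)) := by
            refine Finset.sum_congr rfl fun j _ => ?_
            rw [hzj j, smul_add, smul_comm]
        _ = (∑ j, R i j • x j) + lam • ∑ j, R i j • wv j := by
            rw [Finset.sum_add_distrib, Finset.smul_sum]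
    rw [hsz]
    abel
  have hptw : ∀ i, ‖xplus i - x i‖
      ≤ ‖(∑ j, R i j • x j) - xh‖ + ‖x i - xh‖ + lam * ‖∑ j, R i j • wv j‖ := by
    intro i
    rw [hxplus' i]
    have h1 := norm_add_le ((∑ j, R i j • x j) - xh) ((xh - x i) + lam • (∑ j, R i j • wv j))
    have h2 := norm_add_le (xh - x i) (lam • (∑ j, R i j • wv j))
    rw [norm_smul, Real.norm_eq_abs, abs_of_pos hlam0, norm_sub_rev xh (x i)] at h2
    calc ‖((∑ j, R i j • x j) - xh) + ((xh - x i) + lam • (∑ j, R i j • wv j))‖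
        ≤ ‖(∑ j, R i j • x j) - xh‖ + ‖(xh - x i) + lam • (∑ j, R i j • wv j)‖ := h1
      _ ≤ _ := by linarith
  have htop : Real.sqrt (∑ i, ‖xplus i - x i‖ ^ 2)
      ≤ Real.sqrt (∑ i, ‖(∑ j, R i j • x j) - xh‖ ^ 2)
        + Real.sqrt (∑ i, ‖x i - xh‖ ^ 2)
        + Real.sqrt (∑ i, (lam * ‖∑ j, R i j • wv j‖) ^ 2) := by
    have h := aux_sqrt_wsum n (fun _ => 1) (fun i => ‖xplus i - x i‖)
      (fun i => ‖(∑ j, R i j • x j) - xh‖) (fun i => ‖x i - xh‖)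
      (fun i => lam * ‖∑ j, R i j • wv j‖)
      (fun _ => zero_le_one) (fun i => norm_nonneg _) (fun i => hptw i)
    simpa using h
  have htφ0 : (0:ℝ) ≤ Real.sqrt (1 / fmin φ) := Real.sqrt_nonneg _
  have htφ'0 : (0:ℝ) ≤ Real.sqrt (1 / fmin φ') := Real.sqrt_nonneg _
  have hA : Real.sqrt (∑ i, ‖(∑ j, R i j • x j) - xh‖ ^ 2)
      ≤ Real.sqrt (1 / fmin φ') * (σ * Real.sqrt (∑ i, φ i * ‖x i - xh‖ ^ 2)) := by
    have h1 := aux_unweight φ' hφ'pos (fun i => ‖(∑ j, R i j • x j) - xh‖ ^ 2)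
      (fun i => sq_nonneg _)
    exact h1.trans (mul_le_mul_of_nonneg_left hRcontr htφ'0)
  have hA' : Real.sqrt (∑ i, ‖x i - xh‖ ^ 2)
      ≤ Real.sqrt (1 / fmin φ) * Real.sqrt (∑ i, φ i * ‖x i - xh‖ ^ 2) :=
    aux_unweight φ hφpos (fun i => ‖x i - xh‖ ^ 2) (fun i => sq_nonneg _)
  -- Jensen for the mixing step
  have hCsq : ∀ i, ‖∑ j, R i j • wv j‖ ^ 2 ≤ ∑ j, R i j * ‖wv j‖ ^ 2 := by
    intro i
    have hb1 : ‖∑ j, R i j • wv j‖ ≤ ∑ j, R i j * ‖wv j‖ := by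
      refine (norm_sum_le _ _).trans ?_
      refine le_of_eq (Finset.sum_congr rfl fun j _ => ?_)
      rw [norm_smul, Real.norm_eq_abs, abs_of_nonneg (hRnonneg i j)]
    have he1 : ∀ j, Real.sqrt (R i j) * (Real.sqrt (R i j) * ‖wv j‖) = R i j * ‖wv j‖ := by
      intro j
      rw [← mul_assoc, Real.mul_self_sqrt (hRnonneg i j)]
    have he2 : ∀ j, Real.sqrt (R i j) ^ 2 = R i j := fun j => Real.sq_sqrt (hRnonneg i j)
    have he3 : ∀ j, (Real.sqrt (R i j) * ‖wv j‖) ^ 2 = R i j * ‖wv j‖ ^ 2 := by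
      intro j
      rw [mul_pow, he2]
    have hb2 : (∑ j, R i j * ‖wv j‖) ^ 2 ≤ (∑ j, R i j) * ∑ j, R i j * ‖wv j‖ ^ 2 := by
      calc (∑ j, R i j * ‖wv j‖) ^ 2
          = (∑ j, Real.sqrt (R i j) * (Real.sqrt (R i j) * ‖wv j‖)) ^ 2 := by
            rw [Finset.sum_congr rfl fun j _ => (he1 j).symm]
        _ ≤ (∑ j, Real.sqrt (R i j) ^ 2) * ∑ j, (Real.sqrt (R i j) * ‖wv j‖) ^ 2 :=
            Finset.sum_mul_sq_le_sq_mul_sq Finset.univ _ _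
        _ = (∑ j, R i j) * ∑ j, R i j * ‖wv j‖ ^ 2 := by
            rw [Finset.sum_congr rfl fun j _ => he2 j, Finset.sum_congr rfl fun j _ => he3 j]
    calc ‖∑ j, R i j • wv j‖ ^ 2 ≤ (∑ j, R i j * ‖wv j‖) ^ 2 :=
          pow_le_pow_left₀ (norm_nonneg _) hb1 2
      _ ≤ (∑ j, R i j) * ∑ j, R i j * ‖wv j‖ ^ 2 := hb2
      _ = ∑ j, R i j * ‖wv j‖ ^ 2 := by rw [hRrow i, one_mul]
  have hBsum : (∑ i, φ' i * ‖∑ j, R i j • wv j‖ ^ 2) ≤ ∑ j, φ j * ‖wv j‖ ^ 2 := by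
    calc (∑ i, φ' i * ‖∑ j, R i j • wv j‖ ^ 2)
        ≤ ∑ i, φ' i * ∑ j, R i j * ‖wv j‖ ^ 2 :=
          Finset.sum_le_sum fun i _ => mul_le_mul_of_nonneg_left (hCsq i) (hφ'pos i).le
      _ = ∑ j, (∑ i, φ' i * R i j) * ‖wv j‖ ^ 2 := by
          simp_rw [Finset.mul_sum]
          rw [Finset.sum_comm]
          simp_rw [Finset.sum_mul]
          exact Finset.sum_congr rfl fun j _ => Finset.sum_congr rfl fun i _ => by ring
      _ = ∑ j, φ j * ‖wv j‖ ^ 2 := by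
          refine Finset.sum_congr rfl fun j _ => ?_
          rw [hφR j]
  have hB : Real.sqrt (∑ i, (lam * ‖∑ j, R i j • wv j‖) ^ 2)
      ≤ lam * (Real.sqrt (1 / fmin φ') * Real.sqrt (∑ j, φ j * ‖wv j‖ ^ 2)) := by
    rw [aux_pull lam hlam0.le (fun i => ‖∑ j, R i j • wv j‖)]
    apply mul_le_mul_of_nonneg_left _ hlam0.le
    have h1 := aux_unweight φ' hφ'pos (fun i => ‖∑ j, R i j • wv j‖ ^ 2)
      (fun i => sq_nonneg _)
    exact h1.trans (mul_le_mul_of_nonneg_left (Real.sqrt_le_sqrt hBsum) htφ'0)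
  -- bound on the weighted displacement norm
  have hfm : 0 < fmin φ := by
    show (0:ℝ) < Finset.univ.inf' Finset.univ_nonempty φ
    rw [Finset.lt_inf'_iff]
    exact fun i _ => hφpos i
  have hSw : Real.sqrt (∑ j, φ j * ‖wv j‖ ^ 2)
      ≤ (1 + qmax π μ η 1) * Real.sqrt (∑ i, φ i * ‖x i - xs‖ ^ 2)
        + η * Serr π y
        + η * L * (Real.sqrt (n:ℝ) * (Real.sqrt (1 / fmin φ) * Derr φ x)) := by
    have hmk := aux_sqrt_wsum n φ (fun j => ‖wv j‖)
      (fun j => (1 + qmax π μ η 1) * ‖x j - xs‖)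
      (fun j => η * π j * ‖(π j)⁻¹ • y j - ∑ l, y l‖)
      (fun j => η * (π j * (L * ∑ l, ‖x l - x j‖)))
      (fun j => (hφpos j).le) (fun j => norm_nonneg _)
      (fun j => by simpa [hwv] using hwb j)
    refine hmk.trans ?_
    have hT1 : Real.sqrt (∑ j, φ j * ((1 + qmax π μ η 1) * ‖x j - xs‖) ^ 2)
        = (1 + qmax π μ η 1) * Real.sqrt (∑ i, φ i * ‖x i - xs‖ ^ 2) := by
      have he : (∑ j, φ j * ((1 + qmax π μ η 1) * ‖x j - xs‖) ^ 2)
          = (1 + qmax π μ η 1) ^ 2 * ∑ i, φ i * ‖x i - xs‖ ^ 2 := by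
        rw [Finset.mul_sum]
        exact Finset.sum_congr rfl fun j _ => by ring
      rw [he, Real.sqrt_mul (sq_nonneg _), Real.sqrt_sq (by linarith [hq0])]
    have hT2 : Real.sqrt (∑ j, φ j * (η * π j * ‖(π j)⁻¹ • y j - ∑ l, y l‖) ^ 2)
        ≤ η * Serr π y := by
      have hle : (∑ j, φ j * (η * π j * ‖(π j)⁻¹ • y j - ∑ l, y l‖) ^ 2)
          ≤ η ^ 2 * ∑ j, π j * ‖(π j)⁻¹ • y j - ∑ l, y l‖ ^ 2 := by
        rw [Finset.mul_sum]
        apply Finset.sum_le_sum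
        intro j _
        have h1 : φ j * π j ≤ 1 := by nlinarith [hφ1 j, hπ1 j, (hφpos j).le, (hπpos j).le]
        have hs2 : (0:ℝ) ≤ η ^ 2 * (π j * ‖(π j)⁻¹ • y j - ∑ l, y l‖ ^ 2) :=
          mul_nonneg (sq_nonneg η) (mul_nonneg (hπpos j).le (sq_nonneg _))
        nlinarith [mul_le_mul_of_nonneg_left h1 hs2, (hπpos j).le,
          sq_nonneg ‖(π j)⁻¹ • y j - ∑ l, y l‖]
      calc Real.sqrt (∑ j, φ j * (η * π j * ‖(π j)⁻¹ • y j - ∑ l, y l‖) ^ 2)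
          ≤ Real.sqrt (η ^ 2 * ∑ j, π j * ‖(π j)⁻¹ • y j - ∑ l, y l‖ ^ 2) :=
            Real.sqrt_le_sqrt hle
        _ = η * Serr π y := by
            rw [Real.sqrt_mul (sq_nonneg η), Real.sqrt_sq hη0.le]
            rfl
    have hT3 : Real.sqrt (∑ j, φ j * (η * (π j * (L * ∑ l, ‖x l - x j‖))) ^ 2)
        ≤ η * L * (Real.sqrt (n:ℝ) * (Real.sqrt (1 / fmin φ) * Derr φ x)) := by
      have hpt : ∀ j, φ j * (η * (π j * (L * ∑ l, ‖x l - x j‖))) ^ 2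
          ≤ (η * L) ^ 2 * ((n:ℝ) * ((1 / fmin φ) * (φ j * ∑ l, φ l * ‖x l - x j‖ ^ 2))) := by
        intro j
        have hcs : (∑ l, ‖x l - x j‖) ^ 2 ≤ (n:ℝ) * ∑ l, ‖x l - x j‖ ^ 2 := by
          have h := sq_sum_le_card_mul_sum_sq (s := Finset.univ) (f := fun l => ‖x l - x j‖)
          simpa using h
        have hwt : (∑ l, ‖x l - x j‖ ^ 2) ≤ (1 / fmin φ) * ∑ l, φ l * ‖x l - x j‖ ^ 2 := by
          rw [Finset.mul_sum]
          apply Finset.sum_le_sum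
          intro l _
          have hfl : fmin φ ≤ φ l := Finset.inf'_le _ (Finset.mem_univ l)
          rw [div_mul_eq_mul_div, one_mul, le_div_iff₀ hfm]
          nlinarith [sq_nonneg ‖x l - x j‖]
        have hπ2 : π j ^ 2 ≤ 1 := by nlinarith [hπ1 j, (hπpos j).le]
        have hstep1 : φ j * (∑ l, ‖x l - x j‖) ^ 2 ≤ φ j * ((n:ℝ) * ∑ l, ‖x l - x j‖ ^ 2) :=
          mul_le_mul_of_nonneg_left hcs (hφpos j).le
        have hstep2 : φ j * ((n:ℝ) * ∑ l, ‖x l - x j‖ ^ 2)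
            ≤ φ j * ((n:ℝ) * ((1 / fmin φ) * ∑ l, φ l * ‖x l - x j‖ ^ 2)) := by
          apply mul_le_mul_of_nonneg_left _ (hφpos j).le
          exact mul_le_mul_of_nonneg_left hwt hn0.le
        have hfs : (0:ℝ) ≤ φ j * (∑ l, ‖x l - x j‖) ^ 2 :=
          mul_nonneg (hφpos j).le (sq_nonneg _)
        calc φ j * (η * (π j * (L * ∑ l, ‖x l - x j‖))) ^ 2
            = (η * L) ^ 2 * (π j ^ 2 * (φ j * (∑ l, ‖x l - x j‖) ^ 2)) := by ring
          _ ≤ (η * L) ^ 2 * (1 * (φ j * (∑ l, ‖x l - x j‖) ^ 2)) := by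
              apply mul_le_mul_of_nonneg_left _ (sq_nonneg (η * L))
              exact mul_le_mul_of_nonneg_right hπ2 hfs
          _ = (η * L) ^ 2 * (φ j * (∑ l, ‖x l - x j‖) ^ 2) := by ring
          _ ≤ (η * L) ^ 2 * (φ j * ((n:ℝ) * ((1 / fmin φ) * ∑ l, φ l * ‖x l - x j‖ ^ 2))) := by
              apply mul_le_mul_of_nonneg_left _ (sq_nonneg (η * L))
              exact hstep1.trans hstep2
          _ = (η * L) ^ 2 * ((n:ℝ) * ((1 / fmin φ) * (φ j * ∑ l, φ l * ‖x l - x j‖ ^ 2))) := by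
              ring
      have hsw : (∑ j, φ j * ∑ l, φ l * ‖x l - x j‖ ^ 2)
          = ∑ i, ∑ j, φ i * φ j * ‖x i - x j‖ ^ 2 := by
        simp_rw [Finset.mul_sum]
        rw [Finset.sum_comm]
        exact Finset.sum_congr rfl fun i _ => Finset.sum_congr rfl fun j _ => by ring
      have hle : (∑ j, φ j * (η * (π j * (L * ∑ l, ‖x l - x j‖))) ^ 2)
          ≤ (η * L) ^ 2 * ((n:ℝ) * ((1 / fmin φ)
              * ∑ i, ∑ j, φ i * φ j * ‖x i - x j‖ ^ 2)) := by
        calc (∑ j, φ j * (η * (π j * (L * ∑ l, ‖x l - x j‖))) ^ 2)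
            ≤ ∑ j, (η * L) ^ 2 * ((n:ℝ) * ((1 / fmin φ)
                * (φ j * ∑ l, φ l * ‖x l - x j‖ ^ 2))) := Finset.sum_le_sum fun j _ => hpt j
          _ = (η * L) ^ 2 * ((n:ℝ) * ((1 / fmin φ)
                * ∑ j, φ j * ∑ l, φ l * ‖x l - x j‖ ^ 2)) := by
              simp_rw [← Finset.mul_sum]
          _ = _ := by rw [hsw]
      calc Real.sqrt (∑ j, φ j * (η * (π j * (L * ∑ l, ‖x l - x j‖))) ^ 2)
          ≤ Real.sqrt ((η * L) ^ 2 * ((n:ℝ) * ((1 / fmin φ)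
              * ∑ i, ∑ j, φ i * φ j * ‖x i - x j‖ ^ 2))) := Real.sqrt_le_sqrt hle
        _ = η * L * (Real.sqrt (n:ℝ) * (Real.sqrt (1 / fmin φ) * Derr φ x)) := by
            rw [Real.sqrt_mul (sq_nonneg (η * L)), Real.sqrt_sq (by positivity : (0:ℝ) ≤ η * L),
              Real.sqrt_mul (by positivity : (0:ℝ) ≤ (n:ℝ)),
              Real.sqrt_mul (by positivity : (0:ℝ) ≤ 1 / fmin φ)]
            rfl
    linarith [hT1.le, hT1.ge, hT2, hT3]
  -- variance identity
  have hc0 : (∑ i, φ i • (x i - xh)) = (0 : EuclideanSpace ℝ (Fin d)) := by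
    have h1 : (∑ i, φ i • (x i - xh)) = (∑ i, φ i • x i) - (∑ i, φ i) • xh := by
      simp_rw [smul_sub]
      rw [Finset.sum_sub_distrib, Finset.sum_smul]
    rw [h1, hφsum, one_smul, ← hxh, sub_self]
  have hD2 : (∑ i, ∑ j, φ i * φ j * ‖x i - x j‖ ^ 2)
      = 2 * ∑ i, φ i * ‖x i - xh‖ ^ 2 := by
    have hexp : ∀ i j : Fin n, φ i * φ j * ‖x i - x j‖ ^ 2
        = φ j * (φ i * ‖x i - xh‖ ^ 2) + φ i * (φ j * ‖x j - xh‖ ^ 2)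
          - 2 * ⟪φ i • (x i - xh), φ j • (x j - xh)⟫ := by
      intro i j
      have h1 : x i - x j = (x i - xh) - (x j - xh) := by abel
      rw [h1, norm_sub_sq_real, real_inner_smul_left, real_inner_smul_right]
      ring
    calc (∑ i, ∑ j, φ i * φ j * ‖x i - x j‖ ^ 2)
        = ∑ i, ∑ j, (φ j * (φ i * ‖x i - xh‖ ^ 2) + φ i * (φ j * ‖x j - xh‖ ^ 2)
            - 2 * ⟪φ i • (x i - xh), φ j • (x j - xh)⟫) :=
          Finset.sum_congr rfl fun i _ => Finset.sum_congr rfl fun j _ => hexp i j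
      _ = ∑ i, ((∑ j, φ j) * (φ i * ‖x i - xh‖ ^ 2) + φ i * (∑ j, φ j * ‖x j - xh‖ ^ 2)
            - 2 * ⟪φ i • (x i - xh), ∑ j, φ j • (x j - xh)⟫) := by
          refine Finset.sum_congr rfl fun i _ => ?_
          rw [Finset.sum_sub_distrib, Finset.sum_add_distrib, ← Finset.sum_mul,
            ← Finset.mul_sum, ← Finset.mul_sum, ← inner_sum]
      _ = (∑ j, φ j) * (∑ i, φ i * ‖x i - xh‖ ^ 2)
            + (∑ i, φ i) * (∑ j, φ j * ‖x j - xh‖ ^ 2)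
            - 2 * ⟪∑ i, φ i • (x i - xh), ∑ j, φ j • (x j - xh)⟫ := by
          rw [Finset.sum_sub_distrib, Finset.sum_add_distrib, ← Finset.mul_sum,
            ← Finset.sum_mul, ← Finset.mul_sum, ← sum_inner]
      _ = 2 * ∑ i, φ i * ‖x i - xh‖ ^ 2 := by
          rw [hφsum, hc0, inner_zero_left]
          ring
  have hDx : Derr φ x = Real.sqrt 2 * Real.sqrt (∑ i, φ i * ‖x i - xh‖ ^ 2) := by
    show Real.sqrt (∑ i, ∑ j, φ i * φ j * ‖x i - x j‖ ^ 2) = _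
    rw [hD2, Real.sqrt_mul (by norm_num : (0:ℝ) ≤ 2)]
  have hV : Real.sqrt (∑ i, φ i * ‖x i - xh‖ ^ 2) = 1 / Real.sqrt 2 * Derr φ x := by
    rw [hDx]
    have h2 : Real.sqrt 2 ≠ 0 := by positivity
    field_simp
  -- final assembly
  rw [hV] at hA hA'
  have hBB : Real.sqrt (∑ i, (lam * ‖∑ j, R i j • wv j‖) ^ 2)
      ≤ lam * (Real.sqrt (1 / fmin φ')
        * ((1 + qmax π μ η 1) * Real.sqrt (∑ i, φ i * ‖x i - xs‖ ^ 2)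
          + η * Serr π y
          + η * L * (Real.sqrt (n:ℝ) * (Real.sqrt (1 / fmin φ) * Derr φ x)))) :=
    hB.trans (mul_le_mul_of_nonneg_left
      (mul_le_mul_of_nonneg_left hSw htφ'0) hlam0.le)
  calc Real.sqrt (∑ i, ‖xplus i - x i‖ ^ 2)
      ≤ Real.sqrt (∑ i, ‖(∑ j, R i j • x j) - xh‖ ^ 2)
        + Real.sqrt (∑ i, ‖x i - xh‖ ^ 2)
        + Real.sqrt (∑ i, (lam * ‖∑ j, R i j • wv j‖) ^ 2) := htop
    _ ≤ Real.sqrt (1 / fmin φ') * (σ * (1 / Real.sqrt 2 * Derr φ x))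
        + Real.sqrt (1 / fmin φ) * (1 / Real.sqrt 2 * Derr φ x)
        + lam * (Real.sqrt (1 / fmin φ')
          * ((1 + qmax π μ η 1) * Real.sqrt (∑ i, φ i * ‖x i - xs‖ ^ 2)
            + η * Serr π y
            + η * L * (Real.sqrt (n:ℝ) * (Real.sqrt (1 / fmin φ) * Derr φ x)))) := by
        linarith [hA, hA', hBB]
    _ = lam * Real.sqrt (1 / fmin φ') * (1 + qmax π μ η 1)
          * Real.sqrt (∑ i, φ i * ‖x i - xs‖ ^ 2)
        + ((1 / Real.sqrt 2) * (Real.sqrt (1 / fmin φ) + σ * Real.sqrt (1 / fmin φ'))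
            + η * lam * L * Real.sqrt (1 / fmin φ) * Real.sqrt (1 / fmin φ')
              * Real.sqrt (n : ℝ)) * Derr φ x
        + η * lam * Real.sqrt (1 / fmin φ') * Serr π y := by
        ring
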